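/- Let u, v, v' be words over Fin n all of whose letters are ≥ 2. If u ++ [0] ++ v ++ [1] ++ v' is canonical, and c is canonical with c ~ v ++ v', then u ++ [0] ++ c is canonical. -/

import Mathlib

variable {n : ℕ}

/-- Generating relation of the Kiselman congruence on words over `Fin n`. -/
inductive KisStep : List (Fin n) → List (Fin n) → Prop
  | idem : ∀ (u v : List (Fin n)) (i : Fin n),
      KisStep (u ++ [i, i] ++ v) (u ++ [i] ++ v)
  | left : ∀ (u v : List (Fin n)) (i j : Fin n), i < j →
      KisStep (u ++ [i, j, i] ++ v) (u ++ [i, j] ++ v)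
  | right : ∀ (u v : List (Fin n)) (i j : Fin n), i < j →
      KisStep (u ++ [j, i, j] ++ v) (u ++ [i, j] ++ v)

/-- The Kiselman congruence: smallest equivalence relation containing `KisStep`. -/
def KisEquiv (x y : List (Fin n)) : Prop := Relation.EqvGen KisStep x y

/-- An infix `[i] ++ u ++ [i]` is special if `u` contains a letter `> i` and a letter `< i`. -/
def Special (i : Fin n) (u : List (Fin n)) : Prop :=
  (∃ j ∈ u, i < j) ∧ (∃ j ∈ u, j < i)

/-- A word is canonical if all its infixes of the form `[i] ++ u ++ [i]` are special. -/
def Canonical (w : List (Fin n)) : Prop :=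
  ∀ (i : Fin n) (u : List (Fin n)), ([i] ++ u ++ [i]) <:+: w → Special i u

/-- Delete all letters strictly smaller than `k`. -/
def filterGE (k : Fin n) (w : List (Fin n)) : List (Fin n) :=
  w.filter (fun a => decide (k ≤ a))

/-- `trunc i w` is the longest suffix of `w` with head `i`, or `[]` if `i ∉ w`. -/
def trunc (i : Fin n) : List (Fin n) → List (Fin n)
  | [] => []
  | a :: t => if a = i then a :: t else trunc i t

/-- Longest suffix of `w` whose head is `< k` (as a natural number), or `[]`. -/
def truncLtN (k : ℕ) : List (Fin n) → List (Fin n)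
  | [] => []
  | a :: t => if (a : ℕ) < k then a :: t else truncLtN k t

/-- `join u v = u⁺ ++ v`, where `u⁻` is the longest suffix of `u` that is a sublist of `v`. -/
def join : List (Fin n) → List (Fin n) → List (Fin n)
  | [], v => v
  | a :: t, v => if (a :: t).Sublist v then v else a :: join t v

/-- The local update function at vertex `i` of the update system `S_n^⋆`. -/
def Fstep (i : Fin n) (s : Fin n → List (Fin n)) : Fin n → List (Fin n) :=
  Function.update s i
    (i :: List.foldr join []
      ((((List.finRange n).filter (fun j => decide (i < j))).reverse).map s))

/-- The evolution induced by a word (rightmost letter acts first). -/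
def Fword (w : List (Fin n)) (s : Fin n → List (Fin n)) : Fin n → List (Fin n) :=
  w.foldr Fstep s

/-- The initial system state `⋆`. -/
def starState : Fin n → List (Fin n) := fun _ => []
/-! ### Auxiliary numeric update system -/

def vz : Fin n → ℕ := fun _ => 0

def Va (a : Fin n) (s : Fin n → ℕ) : ℕ := ∑ j ∈ Finset.univ.filter (fun j => a < j), s j

def vstep (c : Fin n) (s : Fin n → ℕ) : Fin n → ℕ := Function.update s c (1 + Va c s)

def vrun (w : List (Fin n)) (s : Fin n → ℕ) : Fin n → ℕ := w.foldr vstep s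

lemma Va_update (a d : Fin n) (s : Fin n → ℕ) (v : ℕ) (h : ¬ a < d) :
    Va a (Function.update s d v) = Va a s := by
  refine Finset.sum_congr rfl fun j hj => ?_
  rw [Finset.mem_filter] at hj
  have hjd : j ≠ d := by rintro rfl; exact h hj.2
  exact Function.update_of_ne hjd _ _

lemma vstep_idem (i : Fin n) (s : Fin n → ℕ) : vstep i (vstep i s) = vstep i s := by
  unfold vstep
  rw [Va_update i i _ _ (lt_irrefl i), Function.update_idem]

lemma vstep_left {i j : Fin n} (h : i < j) (s : Fin n → ℕ) :
    vstep i (vstep j (vstep i s)) = vstep i (vstep j s) := by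
  have h1 : vstep j (vstep i s) = Function.update (vstep j s) i (1 + Va i s) := by
    show Function.update (Function.update s i (1 + Va i s)) j
        (1 + Va j (Function.update s i (1 + Va i s))) = _
    rw [Va_update j i _ _ (asymm h), Function.update_comm (ne_of_lt h)]
    rfl
  rw [h1]
  show Function.update (Function.update (vstep j s) i (1 + Va i s)) i
      (1 + Va i (Function.update (vstep j s) i (1 + Va i s))) = _
  rw [Va_update i i _ _ (lt_irrefl i), Function.update_idem]
  rfl

lemma vstep_right {i j : Fin n} (h : i < j) (s : Fin n → ℕ) :
    vstep j (vstep i (vstep j s)) = vstep i (vstep j s) := by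
  have e1 : Va j (vstep i (vstep j s)) = Va j s := by
    show Va j (Function.update (vstep j s) i _) = _
    rw [Va_update j i _ _ (asymm h)]
    show Va j (Function.update s j _) = _
    rw [Va_update j j _ _ (lt_irrefl j)]
  have e2 : vstep i (vstep j s) j = 1 + Va j s := by
    show Function.update (vstep j s) i _ j = _
    rw [Function.update_of_ne (ne_of_lt h).symm]
    show Function.update s j (1 + Va j s) j = _
    rw [Function.update_self]
  show Function.update (vstep i (vstep j s)) j (1 + Va j (vstep i (vstep j s))) = _
  rw [e1, ← e2, Function.update_eq_self]

lemma vrun_append (w₁ w₂ : List (Fin n)) (s : Fin n → ℕ) :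
    vrun (w₁ ++ w₂) s = vrun w₁ (vrun w₂ s) := by
  simp [vrun, List.foldr_append]

lemma kisStep_vrun {x y : List (Fin n)} (h : KisStep x y) (s : Fin n → ℕ) :
    vrun x s = vrun y s := by
  cases h with
  | idem u v i =>
    rw [vrun_append, vrun_append, vrun_append, vrun_append]
    have : vrun [i, i] (vrun v s) = vrun [i] (vrun v s) := vstep_idem i (vrun v s)
    rw [this]
  | left u v i j hij =>
    rw [vrun_append, vrun_append, vrun_append, vrun_append]
    have : vrun [i, j, i] (vrun v s) = vrun [i, j] (vrun v s) := vstep_left hij (vrun v s)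
    rw [this]
  | right u v i j hij =>
    rw [vrun_append, vrun_append, vrun_append, vrun_append]
    have : vrun [j, i, j] (vrun v s) = vrun [i, j] (vrun v s) := vstep_right hij (vrun v s)
    rw [this]

lemma kisEquiv_vrun {x y : List (Fin n)} (h : KisEquiv x y) (s : Fin n → ℕ) :
    vrun x s = vrun y s := by
  unfold KisEquiv at h
  induction h with
  | rel _ _ hst => exact kisStep_vrun hst s
  | refl _ => rfl
  | symm _ _ _ ih => exact ih.symm
  | trans _ _ _ _ _ ih₁ ih₂ => exact ih₁.trans ih₂

lemma kisStep_mem {x y : List (Fin n)} (h : KisStep x y) (a : Fin n) : a ∈ x ↔ a ∈ y := by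
  cases h <;> simp <;> tauto

lemma kisEquiv_mem {x y : List (Fin n)} (h : KisEquiv x y) (a : Fin n) : a ∈ x ↔ a ∈ y := by
  unfold KisEquiv at h
  induction h with
  | rel _ _ hst => exact kisStep_mem hst a
  | refl _ => exact Iff.rfl
  | symm _ _ _ ih => exact ih.symm
  | trans _ _ _ _ _ ih₁ ih₂ => exact ih₁.trans ih₂

/-! ### Invariant and monotonicity -/

def VInv (s : Fin n → ℕ) : Prop := ∀ c, s c ≤ 1 + Va c s

lemma VInv_vz : VInv (vz : Fin n → ℕ) := fun _ => Nat.zero_le _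

lemma Va_le_vstep {s : Fin n → ℕ} (hs : VInv s) (a c : Fin n) : Va a s ≤ Va a (vstep c s) := by
  by_cases h : a < c
  · have hcF : c ∈ Finset.univ.filter (fun j => a < j) := by simp [h]
    show Va a s ≤ Va a (Function.update s c (1 + Va c s))
    unfold Va
    rw [Finset.sum_update_of_mem hcF, ← Finset.add_sum_erase _ s hcF, Finset.erase_eq]
    exact Nat.add_le_add_right (hs c) _
  · show Va a s ≤ Va a (Function.update s c (1 + Va c s))
    rw [Va_update a c _ _ h]

lemma VInv.step {s : Fin n → ℕ} (hs : VInv s) (c : Fin n) : VInv (vstep c s) := by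
  intro d
  by_cases hdc : d = c
  · subst hdc
    show Function.update s d (1 + Va d s) d ≤ _
    rw [Function.update_self]
    have h2 : Va d (vstep d s) = Va d s := Va_update d d _ _ (lt_irrefl d)
    rw [h2]
  · have hd : vstep c s d = s d := Function.update_of_ne hdc _ _
    rw [hd]
    exact le_trans (hs d) (Nat.add_le_add_left (Va_le_vstep hs d c) 1)

lemma VInv.run {s : Fin n → ℕ} (hs : VInv s) (w : List (Fin n)) : VInv (vrun w s) := by
  induction w with
  | nil => exact hs
  | cons e t ih => exact ih.step e

lemma Va_le_vrun {s : Fin n → ℕ} (hs : VInv s) (a : Fin n) (w : List (Fin n)) :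
    Va a s ≤ Va a (vrun w s) := by
  induction w with
  | nil => exact le_refl _
  | cons e t ih => exact le_trans ih (Va_le_vstep (hs.run t) a e)

lemma vrun_notmem {a : Fin n} {w : List (Fin n)} (h : a ∉ w) (s : Fin n → ℕ) :
    vrun w s a = s a := by
  induction w with
  | nil => rfl
  | cons e t ih =>
    have hae : a ≠ e := by rintro rfl; exact h (List.mem_cons_self)
    have hat : a ∉ t := fun ht => h (List.mem_cons_of_mem _ ht)
    show vstep e (vrun t s) a = s a
    rw [vstep, Function.update_of_ne hae, ih hat]

lemma Va_vrun_small {a : Fin n} {w : List (Fin n)} (h : ∀ e ∈ w, ¬ a < e) (s : Fin n → ℕ) :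
    Va a (vrun w s) = Va a s := by
  induction w with
  | nil => rfl
  | cons e t ih =>
    show Va a (vstep e (vrun t s)) = _
    rw [vstep, Va_update a e _ _ (h e (List.mem_cons_self)),
      ih (fun x hx => h x (List.mem_cons_of_mem _ hx))]

lemma Va_vstep_strict {s : Fin n → ℕ} {a b : Fin n} (hab : a < b) (h : s b < 1 + Va b s) :
    Va a s < Va a (vstep b s) := by
  have hbF : b ∈ Finset.univ.filter (fun j => a < j) := by simp [hab]
  show Va a s < Va a (Function.update s b (1 + Va b s))
  unfold Va
  rw [Finset.sum_update_of_mem hbF, ← Finset.add_sum_erase _ s hbF, Finset.erase_eq]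
  exact Nat.add_lt_add_right h _

/-! ### First occurrence splittings -/

lemma first_split {a : Fin n} {w : List (Fin n)} (h : a ∈ w) :
    ∃ p q, w = p ++ a :: q ∧ a ∉ p := by
  induction w with
  | nil => exact absurd h (List.not_mem_nil)
  | cons e t ih =>
    by_cases he : e = a
    · exact ⟨[], t, by rw [he]; rfl, List.not_mem_nil⟩
    · have hat : a ∈ t := by
        rcases List.mem_cons.mp h with h1 | h1
        · exact absurd h1.symm he
        · exact h1
      obtain ⟨p, q, rfl, hp⟩ := ih hat
      refine ⟨e :: p, q, rfl, ?_⟩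
      simp only [List.mem_cons, not_or]
      exact ⟨fun hh => he hh.symm, hp⟩

lemma first_split_lt {a : Fin n} {w : List (Fin n)} (h : ∃ x ∈ w, a < x) :
    ∃ γ b δ, w = γ ++ b :: δ ∧ a < b ∧ ∀ x ∈ γ, ¬ a < x := by
  induction w with
  | nil => simp at h
  | cons e t ih =>
    by_cases he : a < e
    · exact ⟨[], e, t, rfl, he, by simp⟩
    · have ht : ∃ x ∈ t, a < x := by
        obtain ⟨x, hx, hax⟩ := h
        rcases List.mem_cons.mp hx with rfl | hxt
        · exact absurd hax he
        · exact ⟨x, hxt, hax⟩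
      obtain ⟨γ, b, δ, rfl, hb, hγ⟩ := ih ht
      refine ⟨e :: γ, b, δ, rfl, hb, ?_⟩
      intro x hx
      rcases List.mem_cons.mp hx with rfl | hxγ
      · exact he
      · exact hγ x hxγ

lemma first_split_unique {a : Fin n} : ∀ {p₁ : List (Fin n)} {q₁ p₂ q₂ : List (Fin n)},
    p₁ ++ a :: q₁ = p₂ ++ a :: q₂ → a ∉ p₁ → a ∉ p₂ → p₁ = p₂ := by
  intro p₁
  induction p₁ with
  | nil =>
    intro q₁ p₂ q₂ h h₁ h₂
    cases p₂ with
    | nil => rfl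
    | cons f r =>
      simp only [List.nil_append, List.cons_append, List.cons.injEq] at h
      exact absurd (by rw [h.1]; exact List.mem_cons_self) h₂
  | cons e t ih =>
    intro q₁ p₂ q₂ h h₁ h₂
    cases p₂ with
    | nil =>
      simp only [List.nil_append, List.cons_append, List.cons.injEq] at h
      exact absurd (by rw [← h.1]; exact List.mem_cons_self) h₁
    | cons f r =>
      simp only [List.cons_append, List.cons.injEq] at h
      have ht : t = r := ih h.2 (fun hh => h₁ (List.mem_cons_of_mem _ hh))
        (fun hh => h₂ (List.mem_cons_of_mem _ hh))
      rw [h.1, ht]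

/-! ### The `Rw` property and infix decompositions -/

def Rw (w : List (Fin n)) : Prop :=
  ∀ (m : Fin n) (mid : List (Fin n)), ([m] ++ mid ++ [m]) <:+: w → ∃ j ∈ mid, m < j

lemma Rw.infix {w l : List (Fin n)} (h : Rw w) (hl : l <:+: w) : Rw l :=
  fun m mid hm => h m mid (hm.trans hl)

lemma Canonical.rw {w : List (Fin n)} (h : Canonical w) : Rw w :=
  fun m mid hm => (h m mid hm).1

lemma infix_append_cases {X A B : List (Fin n)} (h : X <:+: A ++ B) :
    X <:+: A ∨ X <:+: B ∨ ∃ X₁ X₂, X = X₁ ++ X₂ ∧ X₁ <:+ A ∧ X₂ <+: B := by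
  obtain ⟨s, t, hst⟩ := h
  rw [List.append_assoc] at hst
  rcases List.append_eq_append_iff.mp hst with ⟨a', ha1, ha2⟩ | ⟨c', hc1, hc2⟩
  · rcases List.append_eq_append_iff.mp ha2 with ⟨b', hb1, hb2⟩ | ⟨d', hd1, hd2⟩
    · left; exact ⟨s, b', by rw [ha1, hb1, List.append_assoc]⟩
    · right; right
      exact ⟨a', d', hd1, ⟨s, ha1.symm⟩, ⟨t, hd2.symm⟩⟩
  · right; left; exact ⟨c', t, by rw [hc2, List.append_assoc]⟩

/-! ### Cleanness at a letter -/

lemma clean_of_prefix_small {p : List (Fin n)} {a : Fin n} (q : List (Fin n)) (s : Fin n → ℕ)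
    (hap : a ∉ p) (hsmall : ∀ x ∈ p, ¬ a < x) :
    vrun (p ++ a :: q) s a = 1 + Va a (vrun (p ++ a :: q) s) := by
  have hsplit : p ++ a :: q = p ++ ([a] ++ q) := by simp
  rw [hsplit, vrun_append, vrun_notmem hap, Va_vrun_small hsmall]
  show vstep a (vrun q s) a = 1 + Va a (vstep a (vrun q s))
  rw [vstep, Function.update_self, Va_update a a _ _ (lt_irrefl a)]

lemma main_rev : ∀ (N : ℕ) (w : List (Fin n)), w.length ≤ N → Rw w → ∀ a : Fin n,
    vrun w vz a = 1 + Va a (vrun w vz) →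
    ∃ p q, w = p ++ a :: q ∧ a ∉ p ∧ ∀ x ∈ p, ¬ a < x := by
  intro N
  induction N with
  | zero =>
    intro w hw hR a hclean
    have hnil : w = [] := List.eq_nil_of_length_eq_zero (Nat.le_zero.mp hw)
    subst hnil
    exfalso
    simp only [vrun, List.foldr_nil, vz] at hclean
    omega
  | succ N ih =>
    intro w hw hR a hclean
    have haw : a ∈ w := by
      by_contra hnw
      rw [vrun_notmem hnw] at hclean
      simp only [vz] at hclean
      omega
    obtain ⟨p, q, rfl, hap⟩ := first_split haw
    refine ⟨p, q, rfl, hap, ?_⟩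
    by_contra hbad
    push_neg at hbad
    obtain ⟨γ, b, p₂, hp, hab, hγ⟩ := first_split_lt hbad
    subst hp
    -- notation
    set S := vrun (p₂ ++ a :: q) vz with hS
    have hIS : VInv S := VInv_vz.run _
    have hslot : vrun ((γ ++ b :: p₂) ++ a :: q) vz a = 1 + Va a (vrun q vz) := by
      have h1 : (γ ++ b :: p₂) ++ a :: q = (γ ++ b :: p₂) ++ ([a] ++ q) := by simp
      rw [h1, vrun_append, vrun_notmem hap]
      show vstep a (vrun q vz) a = _
      rw [vstep, Function.update_self]
    have hVaeq : Va a (vrun q vz) = Va a (vrun ((γ ++ b :: p₂) ++ a :: q) vz) := by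
      have h2 := hclean
      rw [hslot] at h2
      exact Nat.add_left_cancel h2
    have hrw_w : vrun ((γ ++ b :: p₂) ++ a :: q) vz = vrun γ (vstep b S) := by
      have h1 : (γ ++ b :: p₂) ++ a :: q = γ ++ ([b] ++ (p₂ ++ a :: q)) := by simp
      rw [h1, vrun_append, vrun_append]
      rfl
    have hbne : S b ≠ 1 + Va b S := by
      intro hcl
      have hlen : (p₂ ++ a :: q).length ≤ N := by
        have := hw
        simp only [List.length_append, List.length_cons] at this ⊢
        omega
      have hinfδ : (p₂ ++ a :: q) <:+: ((γ ++ b :: p₂) ++ a :: q) :=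
        ⟨γ ++ [b], [], by simp⟩
      obtain ⟨p', q', hδ, hbp', hsm⟩ := ih (p₂ ++ a :: q) hlen (hR.infix hinfδ) b hcl
      have hinfb : ([b] ++ p' ++ [b]) <:+: ((γ ++ b :: p₂) ++ a :: q) := by
        refine ⟨γ, q', ?_⟩
        have hre : (γ ++ b :: p₂) ++ a :: q = γ ++ ([b] ++ (p₂ ++ a :: q)) := by simp
        rw [hre, hδ]
        simp
      obtain ⟨j, hj, hbj⟩ := hR b p' hinfb
      exact (hsm j hj) hbj
    have hblt : S b < 1 + Va b S := lt_of_le_of_ne (hIS b) hbne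
    have hstrict : Va a S < Va a (vstep b S) := Va_vstep_strict hab hblt
    have h1 : Va a (vstep b S) ≤ Va a (vrun γ (vstep b S)) := Va_le_vrun (hIS.step b) a γ
    have h2 : Va a (vrun q vz) ≤ Va a S := by
      have hδe : p₂ ++ a :: q = p₂ ++ ([a] ++ q) := by simp
      have hVaa : Va a (vrun ([a] ++ q) vz) = Va a (vrun q vz) := by
        show Va a (vstep a (vrun q vz)) = _
        rw [vstep, Va_update a a _ _ (lt_irrefl a)]
      rw [hS, hδe, vrun_append, ← hVaa]
      exact Va_le_vrun (VInv_vz.run _) a p₂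
    have : Va a (vrun ((γ ++ b :: p₂) ++ a :: q) vz) < Va a (vrun ((γ ++ b :: p₂) ++ a :: q) vz) := by
      calc Va a (vrun ((γ ++ b :: p₂) ++ a :: q) vz) = Va a (vrun q vz) := hVaeq.symm
        _ ≤ Va a S := h2
        _ < Va a (vstep b S) := hstrict
        _ ≤ Va a (vrun γ (vstep b S)) := h1
        _ = Va a (vrun ((γ ++ b :: p₂) ++ a :: q) vz) := by rw [hrw_w]
    exact lt_irrefl _ this

/-! ### `Rw` for the middle part of a canonical word -/

lemma rw_parts {u v v' : List (Fin n)} {z o : Fin n} (ho : (o : ℕ) = 1)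
    (hv : ∀ a ∈ v, 2 ≤ (a : ℕ))
    (hcan : Canonical (u ++ [z] ++ v ++ [o] ++ v')) : Rw (v ++ v') := by
  intro m mid hinf
  have hvB : v <:+: u ++ [z] ++ v ++ [o] ++ v' := ⟨u ++ [z], [o] ++ v', by simp⟩
  have hv'B : v' <:+: u ++ [z] ++ v ++ [o] ++ v' := ⟨u ++ [z] ++ v ++ [o], [], by simp⟩
  rcases infix_append_cases hinf with h | h | ⟨X₁, X₂, hX, h₁, h₂⟩
  · exact (hcan m mid (h.trans hvB)).1
  · exact (hcan m mid (h.trans hv'B)).1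
  · cases X₁ with
    | nil =>
      rw [List.nil_append] at hX
      rw [← hX] at h₂
      exact (hcan m mid (h₂.isInfix.trans hv'B)).1
    | cons e X₁' =>
      have h3 : m = e ∧ mid ++ [m] = X₁' ++ X₂ := by simpa using hX
      obtain ⟨heq, h5⟩ := h3
      subst heq
      obtain ⟨s₁, hs₁⟩ := id h₁
      rcases List.append_eq_append_iff.mp h5 with ⟨a', ha1, ha2⟩ | ⟨c', hc1, hc2⟩
      · cases a' with
        | nil =>
          rw [List.nil_append] at ha2
          rw [List.append_nil] at ha1
          obtain ⟨t₂, ht₂⟩ := h₂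
          have hmv : m ∈ v := by rw [← hs₁]; simp
          have hm2 : 2 ≤ (m : ℕ) := hv m hmv
          have hinfB : ([m] ++ (mid ++ [o]) ++ [m]) <:+: (u ++ [z] ++ v ++ [o] ++ v') := by
            refine ⟨u ++ [z] ++ s₁, t₂, ?_⟩
            rw [← hs₁, ← ht₂, ← ha2, ha1]
            simp
          obtain ⟨j, hj, hmj⟩ := (hcan m (mid ++ [o]) hinfB).1
          rcases List.mem_append.mp hj with hj | hj
          · exact ⟨j, hj, hmj⟩
          · exfalso
            have hjo : j = o := by simpa using hj
            subst hjo
            rw [Fin.lt_def, ho] at hmj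
            omega
        | cons f a'' =>
          have h6 : f = m ∧ a'' ++ X₂ = [] := by
            have h7 := ha2.symm
            injection h7 with i1 i2
            exact ⟨i1, i2⟩
          have hX₂nil : X₂ = [] := (List.append_eq_nil_iff.mp h6.2).2
          rw [hX₂nil, List.append_nil] at hX
          rw [← hX] at h₁
          exact (hcan m mid (h₁.isInfix.trans hvB)).1
      · obtain ⟨t₂, ht₂⟩ := h₂
        have hmv : m ∈ v := by rw [← hs₁]; simp
        have hm2 : 2 ≤ (m : ℕ) := hv m hmv
        have hinfB : ([m] ++ (X₁' ++ [o] ++ c') ++ [m]) <:+: (u ++ [z] ++ v ++ [o] ++ v') := by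
          refine ⟨u ++ [z] ++ s₁, t₂, ?_⟩
          rw [← hs₁, ← ht₂, hc2]
          simp
        obtain ⟨j, hj, hmj⟩ := (hcan m (X₁' ++ [o] ++ c') hinfB).1
        rcases List.mem_append.mp hj with hj1 | hj1
        · rcases List.mem_append.mp hj1 with hj2 | hj2
          · exact ⟨j, by rw [hc1]; exact List.mem_append_left _ hj2, hmj⟩
          · exfalso
            have hjo : j = o := by simpa using hj2
            subst hjo
            rw [Fin.lt_def, ho] at hmj
            omega
        · exact ⟨j, by rw [hc1]; exact List.mem_append_right _ hj1, hmj⟩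

/-- If `u ++ [0] ++ v ++ [1] ++ v'` is canonical with `u, v, v'` having all letters
`≥ 2`, then `u ++ [0] ++ Can (v ++ v')` is canonical. -/
theorem stmt_9 {n : ℕ} (u v v' c : List (Fin n)) (z o : Fin n)
    (hz : (z : ℕ) = 0) (ho : (o : ℕ) = 1)
    (hu : ∀ a ∈ u, 2 ≤ (a : ℕ)) (hv : ∀ a ∈ v, 2 ≤ (a : ℕ)) (hv' : ∀ a ∈ v', 2 ≤ (a : ℕ))
    (hcan : Canonical (u ++ [z] ++ v ++ [o] ++ v'))
    (hc : Canonical c) (hcv : KisEquiv c (v ++ v')) :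
    Canonical (u ++ [z] ++ c) := by
  have hmem_cx : ∀ a : Fin n, a ∈ c ↔ a ∈ v ++ v' := fun a => kisEquiv_mem hcv a
  have hxval : ∀ a ∈ v ++ v', 2 ≤ (a : ℕ) := by
    intro a ha
    rcases List.mem_append.mp ha with h | h
    exacts [hv a h, hv' a h]
  have hcval : ∀ a ∈ c, 2 ≤ (a : ℕ) := fun a ha => hxval a ((hmem_cx a).mp ha)
  have hRx : Rw (v ++ v') := rw_parts ho hv hcan
  have hAB : (u ++ [z]) <+: (u ++ [z] ++ v ++ [o] ++ v') := ⟨v ++ [o] ++ v', by simp⟩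
  intro i w hinf
  rcases infix_append_cases (A := u ++ [z]) (B := c) hinf with h | h | ⟨X₁, X₂, hX, h₁, h₂⟩
  · exact hcan i w (h.trans hAB.isInfix)
  · exact hc i w h
  · cases X₁ with
    | nil =>
      rw [List.nil_append] at hX
      rw [← hX] at h₂
      exact hc i w h₂.isInfix
    | cons e0 w₁ =>
      have h3 : i = e0 ∧ w ++ [i] = w₁ ++ X₂ := by simpa using hX
      obtain ⟨heq, h5⟩ := h3
      subst heq
      have key : ∀ w₂ : List (Fin n), w = w₁ ++ w₂ → X₂ = w₂ ++ [i] → Special i w := by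
        intro w₂ hw hX₂
        obtain ⟨c₂, hc₂⟩ := h₂
        have hcdec : c = w₂ ++ i :: c₂ := by rw [← hc₂, hX₂]; simp
        have hic : i ∈ c := by rw [hcdec]; simp
        have hi2 : 2 ≤ (i : ℕ) := hcval i hic
        have hiz : i ≠ z := by
          intro hh
          rw [hh, hz] at hi2
          omega
        obtain ⟨pA, hpA⟩ := id h₁
        rcases List.eq_nil_or_concat w₁ with rfl | ⟨w₁', e, rfl⟩
        · exfalso
          have h7 : pA ++ [i] = u ++ [z] := by simpa using hpA
          have h9 := (List.append_inj' h7 rfl).2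
          injection h9 with h9
          exact hiz h9
        · have h7 : (pA ++ i :: w₁') ++ [e] = u ++ [z] := by rw [← hpA]; simp
          obtain ⟨h8, h9⟩ := List.append_inj' h7 rfl
          injection h9 with h9
          subst e
          have hzw : z ∈ w := by rw [hw]; simp
          have hzi : z < i := by rw [Fin.lt_def, hz]; omega
          by_cases hup : ∃ j ∈ w, i < j
          · exact ⟨hup, ⟨z, hzw, hzi⟩⟩
          · exfalso
            push_neg at hup
            have hup' : ∀ j ∈ w, ¬ i < j := fun j hj => not_lt.mpr (hup j hj)
            have hiw₂ : i ∉ w₂ := by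
              intro hiw
              obtain ⟨w₃, w₄, hsplit, -⟩ := first_split hiw
              have hinfc : ([i] ++ w₄ ++ [i]) <:+: c := by
                refine ⟨w₃, c₂, ?_⟩
                rw [hcdec, hsplit]
                simp
              obtain ⟨j, hj, hij⟩ := (hc i w₄ hinfc).1
              have hjw : j ∈ w := by
                rw [hw, hsplit]
                simp [hj]
              exact absurd hij (hup' j hjw)
            have hw₂small : ∀ x ∈ w₂, ¬ i < x :=
              fun x hx => hup' x (by rw [hw]; exact List.mem_append_right _ hx)
            have hcleanc : vrun c vz i = 1 + Va i (vrun c vz) := by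
              rw [hcdec]
              exact clean_of_prefix_small c₂ vz hiw₂ hw₂small
            have hcleanx : vrun (v ++ v') vz i = 1 + Va i (vrun (v ++ v') vz) := by
              rw [← kisEquiv_vrun hcv vz]
              exact hcleanc
            obtain ⟨p, q, hpq, hip, hpsmall⟩ :=
              main_rev (v ++ v').length (v ++ v') le_rfl hRx i hcleanx
            have hix : i ∈ v ++ v' := (hmem_cx i).mp hic
            obtain ⟨x₁, x₂, hx12, hix₁⟩ := first_split hix
            have hw₁'small : ∀ x ∈ w₁', ¬ i < x := by
              intro x hx
              exact hup' x (by rw [hw]; exact List.mem_append_left _ (by simp [hx]))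
            have hbx₁ : ∃ b ∈ x₁, i < b := by
              have hxve : x₁ ++ i :: x₂ = v ++ v' := hx12.symm
              rcases List.append_eq_append_iff.mp hxve with ⟨a2, hva, h2a⟩ | ⟨c2', hx1e, hv'e⟩
              · cases a2 with
                | nil =>
                  rw [List.append_nil] at hva
                  rw [List.nil_append] at h2a
                  have hinfB : ([i] ++ (w₁' ++ [z] ++ v ++ [o]) ++ [i]) <:+:
                      (u ++ [z] ++ v ++ [o] ++ v') := by
                    refine ⟨pA, x₂, ?_⟩
                    rw [← h8, ← h2a]
                    simp
                  obtain ⟨j, hj, hij⟩ := (hcan i (w₁' ++ [z] ++ v ++ [o]) hinfB).1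
                  rcases List.mem_append.mp hj with hj1 | hj1
                  · rcases List.mem_append.mp hj1 with hj2 | hj2
                    · rcases List.mem_append.mp hj2 with hj3 | hj3
                      · exact absurd hij (hw₁'small j hj3)
                      · exfalso
                        have hjz : j = z := by simpa using hj3
                        subst hjz
                        rw [Fin.lt_def, hz] at hij
                        omega
                    · exact ⟨j, by rw [← hva]; exact hj2, hij⟩
                  · exfalso
                    have hjo : j = o := by simpa using hj1
                    subst hjo
                    rw [Fin.lt_def, ho] at hij
                    omega
                | cons f a2' =>
                  have hfa : f = i ∧ x₂ = a2' ++ v' := by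
                    have h2a' := h2a
                    simp only [List.cons_append] at h2a'
                    injection h2a' with i1 i2
                    exact ⟨i1.symm, i2⟩
                  obtain ⟨hfi, hx₂e⟩ := hfa
                  subst f
                  have hinfB : ([i] ++ (w₁' ++ [z] ++ x₁) ++ [i]) <:+:
                      (u ++ [z] ++ v ++ [o] ++ v') := by
                    refine ⟨pA, a2' ++ [o] ++ v', ?_⟩
                    rw [← h8, hva]
                    simp
                  obtain ⟨j, hj, hij⟩ := (hcan i (w₁' ++ [z] ++ x₁) hinfB).1
                  rcases List.mem_append.mp hj with hj1 | hj1
                  · rcases List.mem_append.mp hj1 with hj2 | hj2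
                    · exact absurd hij (hw₁'small j hj2)
                    · exfalso
                      have hjz : j = z := by simpa using hj2
                      subst hjz
                      rw [Fin.lt_def, hz] at hij
                      omega
                  · exact ⟨j, hj1, hij⟩
              · have hinfB : ([i] ++ (w₁' ++ [z] ++ v ++ [o] ++ c2') ++ [i]) <:+:
                    (u ++ [z] ++ v ++ [o] ++ v') := by
                  refine ⟨pA, x₂, ?_⟩
                  rw [← h8, hv'e]
                  simp
                obtain ⟨j, hj, hij⟩ := (hcan i (w₁' ++ [z] ++ v ++ [o] ++ c2') hinfB).1
                rcases List.mem_append.mp hj with hj1 | hj1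
                · rcases List.mem_append.mp hj1 with hj2 | hj2
                  · rcases List.mem_append.mp hj2 with hj3 | hj3
                    · rcases List.mem_append.mp hj3 with hj4 | hj4
                      · exact absurd hij (hw₁'small j hj4)
                      · exfalso
                        have hjz : j = z := by simpa using hj4
                        subst hjz
                        rw [Fin.lt_def, hz] at hij
                        omega
                    · exact ⟨j, by rw [hx1e]; exact List.mem_append_left _ hj3, hij⟩
                  · exfalso
                    have hjo : j = o := by simpa using hj2
                    subst hjo
                    rw [Fin.lt_def, ho] at hij
                    omega
                · exact ⟨j, by rw [hx1e]; exact List.mem_append_right _ hj1, hij⟩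
            have hpx : p = x₁ := first_split_unique (by rw [← hpq, ← hx12]) hip hix₁
            obtain ⟨b, hb, hib⟩ := hbx₁
            exact (hpsmall b (by rw [hpx]; exact hb)) hib
      rcases List.append_eq_append_iff.mp h5 with ⟨a', ha1, ha2⟩ | ⟨c', hc1, hc2⟩
      · cases a' with
        | nil =>
          rw [List.append_nil] at ha1
          rw [List.nil_append] at ha2
          exact key [] (by rw [ha1, List.append_nil]) (by rw [← ha2]; rfl)
        | cons f a'' =>
          have h6 : f = i ∧ a'' ++ X₂ = [] := by
            have h7 := ha2.symm
            injection h7 with i1 i2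
            exact ⟨i1, i2⟩
          have hX₂nil : X₂ = [] := (List.append_eq_nil_iff.mp h6.2).2
          rw [hX₂nil, List.append_nil] at hX
          rw [← hX] at h₁
          exact hcan i w (h₁.isInfix.trans hAB.isInfix)
      · exact key c' hc1 (by rw [hc2])
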